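/- Let b̂ be a family of strictly positive compatible beliefs: probability vectors b̂_i on {1,…,q} for each i ∈ V and b̂_a on {1,…,q}^a for each a ∈ F, satisfying Σ_{x_{a∖i}} b̂_a(x_a) = b̂_i(x_i) for every a and every i ∈ a. Choose the local functions φ_i(x_i) = b̂_i(x_i) and ψ_a(x_a) = b̂_a(x_a) / ∏_{i∈a} b̂_i(x_i). Then the constant message set m with m_{a→i}(x) = 1 for all edges and all x is a fixed point of the BP update, Θ_{ai}(m)(x_i) = 1 = m_{a→i}(x_i), and its associated beliefs are exactly b_i = b̂_i and b_a = b̂_a (with normalization constants Z_i(m) = Z_a(m) = 1). -/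

import Mathlib

open Finset Filter

variable {V F : Type*} [Fintype V] [DecidableEq V] [Fintype F] [DecidableEq F]

/-- Configurations on the factor `a`: tuples `x_a ∈ {1,…,q}^a`. -/
abbrev Config (S : F → Finset V) (q : ℕ) (a : F) := {i : V // i ∈ S a} → Fin q

/-- The message `n_{i→a}(x_i) = φ_i(x_i) ∏_{a'∋i, a'≠a} m_{a'→i}(x_i)`. -/
noncomputable def nmsg (S : F → Finset V) {q : ℕ} (φ : V → Fin q → ℝ)
    (m : F → V → Fin q → ℝ) (i : V) (a : F) (x : Fin q) : ℝ :=
  φ i x * ∏ a' ∈ univ.filter (fun a' : F => i ∈ S a' ∧ a' ≠ a), m a' i x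

/-- The belief-propagation update `Θ_{ai}(m)(x_i) = Σ_{x_{a∖i}} ψ_a(x_a) ∏_{j∈a∖i} n_{j→a}(x_j)`. -/
noncomputable def theta (S : F → Finset V) {q : ℕ} (φ : V → Fin q → ℝ)
    (ψ : ∀ a : F, Config S q a → ℝ) (m : F → V → Fin q → ℝ)
    (a : F) (i : V) (hi : i ∈ S a) (x : Fin q) : ℝ :=
  ∑ y ∈ univ.filter (fun y : Config S q a => y ⟨i, hi⟩ = x),
    ψ a y * ∏ j ∈ (S a).attach.filter (fun j => j.1 ≠ i), nmsg S φ m j.1 a (y j)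

/-- The normalization constant `Z_i(m)` making the variable belief sum to `1`. -/
noncomputable def Zv (S : F → Finset V) {q : ℕ} (φ : V → Fin q → ℝ)
    (m : F → V → Fin q → ℝ) (i : V) : ℝ :=
  ∑ x : Fin q, φ i x * ∏ a ∈ univ.filter (fun a : F => i ∈ S a), m a i x

/-- The variable belief `b_i(x_i) = φ_i(x_i) ∏_{a∋i} m_{a→i}(x_i) / Z_i(m)`. -/
noncomputable def bv (S : F → Finset V) {q : ℕ} (φ : V → Fin q → ℝ)
    (m : F → V → Fin q → ℝ) (i : V) (x : Fin q) : ℝ :=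
  (φ i x * ∏ a ∈ univ.filter (fun a : F => i ∈ S a), m a i x) / Zv S φ m i

/-- The normalization constant `Z_a(m)` making the factor belief sum to `1`. -/
noncomputable def Zf (S : F → Finset V) {q : ℕ} (φ : V → Fin q → ℝ)
    (ψ : ∀ a : F, Config S q a → ℝ) (m : F → V → Fin q → ℝ) (a : F) : ℝ :=
  ∑ y : Config S q a, ψ a y * ∏ j ∈ (S a).attach, nmsg S φ m j.1 a (y j)

/-- The factor belief `b_a(x_a) = ψ_a(x_a) ∏_{i∈a} n_{i→a}(x_i) / Z_a(m)`. -/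
noncomputable def bfn (S : F → Finset V) {q : ℕ} (φ : V → Fin q → ℝ)
    (ψ : ∀ a : F, Config S q a → ℝ) (m : F → V → Fin q → ℝ) (a : F)
    (y : Config S q a) : ℝ :=
  (ψ a y * ∏ j ∈ (S a).attach, nmsg S φ m j.1 a (y j)) / Zf S φ ψ m a

/-- Prescribing a set of strictly positive compatible beliefs `b̂` and choosing
`φ_i = b̂_i`, `ψ_a = b̂_a / ∏_{i∈a} b̂_i`, the constant messages `m ≡ 1` form a BP fixed
point whose beliefs are exactly `b̂`, with normalization constants `Z_i = Z_a = 1`. -/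
theorem prescribed_beliefs_fixed_point
    (q : ℕ) (hq : 1 ≤ q) (S : F → Finset V) (hS : ∀ a, (S a).Nonempty)
    (bhi : V → Fin q → ℝ) (bha : ∀ a : F, Config S q a → ℝ)
    (hbhi : ∀ i x, 0 < bhi i x) (hbha : ∀ a y, 0 < bha a y)
    (hsumi : ∀ i, ∑ x, bhi i x = 1)
    (hsuma : ∀ a, ∑ y : Config S q a, bha a y = 1)
    (hcompat : ∀ a i (hi : i ∈ S a) (x : Fin q),
      ∑ y ∈ univ.filter (fun y : Config S q a => y ⟨i, hi⟩ = x), bha a y = bhi i x)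
    (φ : V → Fin q → ℝ) (hφ : φ = bhi)
    (ψ : ∀ a : F, Config S q a → ℝ)
    (hψ : ∀ a y, ψ a y = bha a y / ∏ j ∈ (S a).attach, bhi j.1 (y j))
    (m : F → V → Fin q → ℝ) (hm : ∀ a i x, m a i x = 1) :
    (∀ a i (hi : i ∈ S a) (x : Fin q),
      theta S φ ψ m a i hi x = 1 ∧ theta S φ ψ m a i hi x = m a i x) ∧
    (∀ i, Zv S φ m i = 1) ∧ (∀ a, Zf S φ ψ m a = 1) ∧
    (∀ i x, bv S φ m i x = bhi i x) ∧
    (∀ (a : F) (y : Config S q a), bfn S φ ψ m a y = bha a y) := by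
  subst hφ
  have hn : ∀ i a x, nmsg S φ m i a x = φ i x := by
    intro i a x; simp [nmsg, hm]
  have hsplit : ∀ (a : F) (i : V) (hi : i ∈ S a) (y : Config S q a),
      ∏ j ∈ (S a).attach, φ j.1 (y j)
        = φ i (y ⟨i, hi⟩) *
          ∏ j ∈ (S a).attach.filter (fun j => j.1 ≠ i), φ j.1 (y j) := by
    intro a i hi y
    rw [← Finset.prod_filter_mul_prod_filter_not (S a).attach (fun j => j.1 = i)]
    congr 1
    have : (S a).attach.filter (fun j => j.1 = i) = {⟨i, hi⟩} := by
      ext j; simp [Finset.mem_filter, Subtype.ext_iff]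
    rw [this, Finset.prod_singleton]
  have hprodpos : ∀ (a : F) (y : Config S q a),
      (0 : ℝ) < ∏ j ∈ (S a).attach, φ j.1 (y j) :=
    fun a y => Finset.prod_pos fun j _ => hbhi j.1 (y j)
  have hZv : ∀ i, Zv S φ m i = 1 := by
    intro i; simp [Zv, hm, hsumi i]
  have hZf : ∀ a, Zf S φ ψ m a = 1 := by
    intro a
    rw [Zf]
    rw [Finset.sum_congr rfl (fun y _ => ?_), hsuma a]
    rw [hψ]
    rw [Finset.prod_congr rfl (fun j _ => hn j.1 a (y j))]
    exact div_mul_cancel₀ _ (hprodpos a y).ne'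
  have hth : ∀ a i (hi : i ∈ S a) (x : Fin q), theta S φ ψ m a i hi x = 1 := by
    intro a i hi x
    have hbx := (hbhi i x).ne'
    rw [theta]
    have key : ∀ y ∈ univ.filter (fun y : Config S q a => y ⟨i, hi⟩ = x),
        ψ a y * ∏ j ∈ (S a).attach.filter (fun j => j.1 ≠ i), nmsg S φ m j.1 a (y j)
          = bha a y / φ i x := by
      intro y hy
      have hyi : y ⟨i, hi⟩ = x := by simpa using hy
      have hne : (∏ j ∈ (S a).attach, φ j.1 (y j)) ≠ 0 := (hprodpos a y).ne'
      have hfilt : (∏ j ∈ (S a).attach.filter (fun j => j.1 ≠ i), φ j.1 (y j)) ≠ 0 :=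
        (Finset.prod_pos fun j _ => hbhi j.1 (y j)).ne'
      rw [Finset.prod_congr rfl (fun j _ => hn j.1 a (y j)), hψ, hsplit a i hi y, hyi]
      field_simp
    rw [Finset.sum_congr rfl key, ← Finset.sum_div, hcompat a i hi x, div_self hbx]
    done
  refine ⟨fun a i hi x => ⟨hth a i hi x, by rw [hth a i hi x, hm]⟩, hZv, hZf, ?_, ?_⟩
  · intro i x
    simp [bv, hZv i, hm]
  · intro a y
    rw [bfn, hZf a, div_one, hψ,
      Finset.prod_congr rfl (fun j _ => hn j.1 a (y j))]
    exact div_mul_cancel₀ _ (hprodpos a y).ne'
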